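/- Let K ⊆ J ⊆ S and set K' := w_{J,0} K w_{J,0} ⊆ J. Write ᴷW_J for the set of elements u of W_J of minimal length in their coset W_K u. Then the map u ↦ w_{J,0} w_{K,0} u is a bijection from ᴷW_J onto ᴷ'W_J which reverses the Bruhat order: for all u, u' ∈ ᴷW_J, u ≤ u' if and only if the image of u' is ≤ the image of u (an anti-isomorphism of posets). -/

import Mathlib

variable {B W : Type*} [Group W] {M : CoxeterMatrix B}

/-- The Bruhat order on a Coxeter group: `x ≤ y` iff some reduced word for `y` admits a
sublist which is a reduced word for `x`. -/
def BruhatLE (cs : CoxeterSystem M W) (x y : W) : Prop :=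
  ∃ l' : List B, cs.wordProd l' = y ∧ l'.length = cs.length y ∧
    ∃ l : List B, l.Sublist l' ∧ cs.wordProd l = x ∧ l.length = cs.length x

/-- `ᴷW_J`: the elements of `W_J` of minimal length in their coset `W_K u`. -/
def minRepsIn (cs : CoxeterSystem M W) (J K : Set W) : Set W :=
  {u | u ∈ Subgroup.closure J ∧ ∀ v ∈ Subgroup.closure K, cs.length u ≤ cs.length (v * u)}

/-- `w` is the longest element of the standard parabolic subgroup generated by `X`. -/
def IsLongestOf (cs : CoxeterSystem M W) (X : Set W) (w : W) : Prop :=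
  w ∈ Subgroup.closure X ∧ ∀ v ∈ Subgroup.closure X, cs.length v ≤ cs.length w

open List CoxeterSystem

namespace BruhatAux
set_option linter.unusedSectionVars false

variable {B W : Type*} [Group W] [DecidableEq W] {M : CoxeterMatrix B}
variable (cs : CoxeterSystem M W)

local prefix:100 "σ" => cs.simple
local prefix:100 "ℓ" => cs.length
local prefix:100 "π" => cs.wordProd

/-- The function underlying the sign permutation attached to a simple reflection. -/
def fFun (i : B) : W × ℤˣ → W × ℤˣ :=
  fun p => (σ i * p.1 * σ i, if p.1 = σ i then -p.2 else p.2)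

lemma fFun_invol (i : B) : Function.Involutive (fFun cs i) := by
  intro p
  obtain ⟨t, e⟩ := p
  simp only [fFun]
  by_cases h : t = σ i
  · subst h
    simp [cs.simple_mul_simple_self]
  · have h2 : σ i * t * σ i ≠ σ i := by
      intro hc
      apply h
      have := congrArg (fun x => σ i * x * σ i) hc
      simpa [mul_assoc, cs.simple_mul_simple_self] using this.symm.symm
    have h3 : σ i * (σ i * t * σ i) * σ i = t := by
      have h1 : σ i * σ i = 1 := cs.simple_mul_simple_self i
      calc σ i * (σ i * t * σ i) * σ i = (σ i * σ i) * t * (σ i * σ i) := by group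
        _ = t := by rw [h1]; group
    simp [h, h2, h3]

/-- The sign permutation attached to a simple reflection. -/
def fPerm (i : B) : Equiv.Perm (W × ℤˣ) := (fFun_invol cs i).toPerm

lemma fPerm_apply (i : B) (t : W) (e : ℤˣ) :
    fPerm cs i (t, e) = (σ i * t * σ i, if t = σ i then -e else e) := rfl

lemma card_filter_range_succ (f : ℕ → Prop) [DecidablePred f] (n : ℕ) :
    ((Finset.range (n+1)).filter f).card
      = ((Finset.range n).filter f).card + (if f n then 1 else 0) := by
  rw [Finset.range_add_one, Finset.filter_insert]
  by_cases h : f n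
  · rw [if_pos h, if_pos h, Finset.card_insert_of_notMem (by simp)]
  · rw [if_neg h, if_neg h, add_zero]


lemma gen_conj_iff (a c t : W) : (a * t * a⁻¹ = c) ↔ (t = a⁻¹ * c * a) := by
  constructor
  · intro h; rw [← h]; group
  · intro h; rw [h]; group

lemma gen_mul_iff (a c t : W) : (a * t = c) ↔ (t = a⁻¹ * c) := by
  constructor
  · intro h; rw [← h]; group
  · intro h; rw [h]; group

lemma simple_conj_inv (j : B) (x : W) : σ j * (σ j * x * σ j) * σ j = x := by
  have h1 : σ j * σ j = 1 := cs.simple_mul_simple_self j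
  calc σ j * (σ j * x * σ j) * σ j = (σ j * σ j) * x * (σ j * σ j) := by group
    _ = x := by rw [h1]; group

lemma simple_conj_iff (j : B) (x c : W) : (σ j * x * σ j = c) ↔ (x = σ j * c * σ j) := by
  constructor
  · intro h; rw [← h, simple_conj_inv]
  · intro h; rw [h, simple_conj_inv]

lemma hp_inv (i j : B) : (σ i * σ j)⁻¹ = σ j * σ i := by
  rw [mul_inv_rev, cs.inv_simple, cs.inv_simple]

lemma hconj (i j : B) (m : ℕ) :
    σ j * (σ i * σ j)^m = ((σ i * σ j)^m)⁻¹ * σ j := by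
  have key : (MulAut.conj (σ j)) ((σ i * σ j)^m) = ((σ i * σ j)^m)⁻¹ := by
    rw [map_pow, ← inv_pow]
    congr 1
    show σ j * (σ i * σ j) * (σ j)⁻¹ = (σ i * σ j)⁻¹
    rw [cs.inv_simple, hp_inv]
    calc σ j * (σ i * σ j) * σ j = (σ j * σ i) * (σ j * σ j) := by group
      _ = σ j * σ i := by rw [cs.simple_mul_simple_self]; group
  have key2 : σ j * (σ i * σ j)^m * (σ j)⁻¹ = ((σ i * σ j)^m)⁻¹ := key
  rw [cs.inv_simple] at key2
  calc σ j * (σ i * σ j)^m = (σ j * (σ i * σ j)^m * σ j) * σ j := by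
        rw [mul_assoc, cs.simple_mul_simple_self, mul_one]
    _ = ((σ i * σ j)^m)⁻¹ * σ j := by rw [key2]

lemma hr1 (i j : B) (m : ℕ) :
    ((σ i * σ j)^m)⁻¹ * σ j * (σ i * σ j)^m = ((σ i * σ j)^(2*m))⁻¹ * σ j := by
  rw [mul_assoc, hconj, two_mul, pow_add]
  group

lemma hr2 (i j : B) (m : ℕ) :
    ((σ i * σ j)^m)⁻¹ * (σ j * σ i * σ j) * (σ i * σ j)^m
      = ((σ i * σ j)^(2*m+1))⁻¹ * σ j := by
  have h1 : σ j * σ i * σ j = (σ i * σ j)⁻¹ * σ j := by rw [hp_inv]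
  rw [h1]
  calc ((σ i * σ j)^m)⁻¹ * ((σ i * σ j)⁻¹ * σ j) * (σ i * σ j)^m
      = ((σ i * σ j)^m)⁻¹ * (σ i * σ j)⁻¹ * (σ j * (σ i * σ j)^m) := by group
    _ = ((σ i * σ j)^m)⁻¹ * (σ i * σ j)⁻¹ * (((σ i * σ j)^m)⁻¹ * σ j) := by rw [hconj]
    _ = (((σ i * σ j)^m) * (σ i * σ j) * ((σ i * σ j)^m))⁻¹ * σ j := by group
    _ = ((σ i * σ j)^(2*m+1))⁻¹ * σ j := by
        congr 2
        have h2 : (σ i * σ j)^m * (σ i * σ j) * (σ i * σ j)^m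
            = (σ i * σ j)^(m + 1 + m) := by rw [pow_add, pow_add, pow_one]
        rw [h2]
        congr 1
        omega

lemma fPerm_cond1 (i j : B) (m : ℕ) (t : W) :
    ((σ i * σ j)^m * t * ((σ i * σ j)^m)⁻¹ = σ j) ↔ ((σ i * σ j)^(2*m) * t = σ j) := by
  rw [gen_conj_iff, gen_mul_iff, hr1]

lemma fPerm_cond2 (i j : B) (m : ℕ) (t : W) :
    (σ j * ((σ i * σ j)^m * t * ((σ i * σ j)^m)⁻¹) * σ j = σ i)
      ↔ ((σ i * σ j)^(2*m+1) * t = σ j) := by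
  rw [simple_conj_iff, gen_conj_iff, gen_mul_iff, ← hr2]

lemma fPerm_pow (i j : B) (m : ℕ) (t : W) (e : ℤˣ) :
    ((fPerm cs i * fPerm cs j) ^ m) (t, e) =
      ((σ i * σ j)^m * t * ((σ i * σ j)^m)⁻¹,
        e * (-1) ^ (((Finset.range (2*m)).filter
            (fun l => (σ i * σ j)^l * t = σ j)).card)) := by
  induction m with
  | zero => simp
  | succ m ih =>
    rw [pow_succ', Equiv.Perm.mul_apply, ih, Equiv.Perm.mul_apply, fPerm_apply,
      fPerm_apply]
    have hcards : ((Finset.range (2*(m+1))).filter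
        (fun l => (σ i * σ j)^l * t = σ j)).card
        = ((Finset.range (2*m)).filter (fun l => (σ i * σ j)^l * t = σ j)).card
          + (if (σ i * σ j)^(2*m) * t = σ j then 1 else 0)
          + (if (σ i * σ j)^(2*m+1) * t = σ j then 1 else 0) := by
      have h2 : 2*(m+1) = (2*m+1)+1 := by omega
      rw [h2, card_filter_range_succ, card_filter_range_succ]
    have hfst : σ i * (σ j * ((σ i * σ j)^m * t * ((σ i * σ j)^m)⁻¹) * σ j) * σ i
        = (σ i * σ j)^(m+1) * t * ((σ i * σ j)^(m+1))⁻¹ := by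
      have hc : ∀ x : W, σ i * (σ j * x * σ j) * σ i
          = (σ i * σ j) * x * (σ i * σ j)⁻¹ := by
        intro x; rw [hp_inv]; group
      have habs : ∀ p : W, p * (p^m * t * (p^m)⁻¹) * p⁻¹ = p^(m+1) * t * (p^(m+1))⁻¹ := by
        intro p; rw [pow_succ']; group
      rw [hc]
      exact habs _
    refine Prod.ext ?_ ?_
    · exact hfst
    · show (if σ j * ((σ i * σ j)^m * t * ((σ i * σ j)^m)⁻¹) * σ j = σ i
          then -(if (σ i * σ j)^m * t * ((σ i * σ j)^m)⁻¹ = σ j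
            then -(e * (-1) ^ (((Finset.range (2*m)).filter
              (fun l => (σ i * σ j)^l * t = σ j)).card))
            else (e * (-1) ^ (((Finset.range (2*m)).filter
              (fun l => (σ i * σ j)^l * t = σ j)).card)))
          else (if (σ i * σ j)^m * t * ((σ i * σ j)^m)⁻¹ = σ j
            then -(e * (-1) ^ (((Finset.range (2*m)).filter
              (fun l => (σ i * σ j)^l * t = σ j)).card))
            else (e * (-1) ^ (((Finset.range (2*m)).filter
              (fun l => (σ i * σ j)^l * t = σ j)).card)))) = _
      rw [hcards]
      by_cases hc1 : (σ i * σ j)^(2*m) * t = σ j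
        <;> by_cases hc2 : (σ i * σ j)^(2*m+1) * t = σ j
      · rw [if_pos ((fPerm_cond1 cs i j m t).mpr hc1),
          if_pos ((fPerm_cond2 cs i j m t).mpr hc2), if_pos hc1, if_pos hc2]
        simp [pow_succ]
      · rw [if_pos ((fPerm_cond1 cs i j m t).mpr hc1),
          if_neg (fun h => hc2 ((fPerm_cond2 cs i j m t).mp h)), if_pos hc1, if_neg hc2]
        simp [pow_succ]
      · rw [if_neg (fun h => hc1 ((fPerm_cond1 cs i j m t).mp h)),
          if_pos ((fPerm_cond2 cs i j m t).mpr hc2), if_neg hc1, if_pos hc2]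
        simp [pow_succ]
      · rw [if_neg (fun h => hc1 ((fPerm_cond1 cs i j m t).mp h)),
          if_neg (fun h => hc2 ((fPerm_cond2 cs i j m t).mp h)), if_neg hc1, if_neg hc2]
        simp [pow_succ]

lemma fPerm_liftable : M.IsLiftable (fPerm cs) := by
  intro i j
  have hp : (σ i * σ j) ^ M i j = 1 := cs.simple_mul_simple_pow i j
  apply Equiv.ext
  rintro ⟨t, e⟩
  rw [fPerm_pow, hp]
  have heven : Even (((Finset.range (2 * M i j)).filter
      (fun l => (σ i * σ j)^l * t = σ j)).card) := by
    rw [two_mul, Finset.range_add, Finset.filter_union,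
      Finset.card_union_of_disjoint (Finset.disjoint_filter_filter
        (Finset.disjoint_range_addLeftEmbedding _ _)),
      Finset.filter_map, Finset.card_map]
    have hc : (Finset.range (M i j)).filter
        ((fun l => (σ i * σ j)^l * t = σ j) ∘ (addLeftEmbedding (M i j)))
        = (Finset.range (M i j)).filter (fun l => (σ i * σ j)^l * t = σ j) := by
      apply Finset.filter_congr
      intro l _
      simp [Function.comp, addLeftEmbedding_apply, pow_add, hp]
    rw [hc]
    exact ⟨_, rfl⟩
  have h1 : ((-1 : ℤˣ)) ^ (((Finset.range (2 * M i j)).filter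
      (fun l => (σ i * σ j)^l * t = σ j)).card) = 1 := heven.neg_one_pow
  rw [h1, Equiv.Perm.one_apply]
  simp

/-- The sign representation of a Coxeter group on `W × ℤˣ`. -/
def sgnRep : W →* Equiv.Perm (W × ℤˣ) := cs.lift ⟨fPerm cs, fPerm_liftable cs⟩

lemma sgnRep_simple (i : B) : sgnRep cs (σ i) = fPerm cs i :=
  cs.lift_apply_simple (fPerm_liftable cs) i

lemma count_lis_cons (i : B) (ω : List B) (t : W) :
    (cs.leftInvSeq (i :: ω)).count t
      = (cs.leftInvSeq ω).count (σ i * t * σ i) + (if t = σ i then 1 else 0) := by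
  have hlis : cs.leftInvSeq (i :: ω)
      = σ i :: List.map (⇑(MulAut.conj (σ i))) (cs.leftInvSeq ω) := rfl
  rw [hlis, List.count_cons]
  congr 1
  · have hinj : Function.Injective (⇑(MulAut.conj (σ i))) := (MulAut.conj (σ i)).injective
    have ht : t = (MulAut.conj (σ i)) (σ i * t * σ i) := by
      simp only [MulAut.conj_apply, cs.inv_simple]
      rw [simple_conj_inv]
    nth_rw 1 [ht]
    exact List.count_map_of_injective _ _ hinj _
  · simp only [beq_iff_eq]
    by_cases h : t = σ i
    · rw [if_pos h, if_pos h.symm]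
    · rw [if_neg h, if_neg (fun hh => h hh.symm)]

lemma sgnRep_wordProd_inv (ω : List B) (t : W) (e : ℤˣ) :
    sgnRep cs (π ω)⁻¹ (t, e)
      = ((π ω)⁻¹ * t * (π ω), e * (-1) ^ ((cs.leftInvSeq ω).count t)) := by
  induction ω generalizing t e with
  | nil => simp
  | cons i ω ih =>
    have h0 : (π (i :: ω))⁻¹ = (π ω)⁻¹ * σ i := by
      rw [cs.wordProd_cons, mul_inv_rev, cs.inv_simple]
    rw [h0, map_mul, Equiv.Perm.mul_apply, sgnRep_simple, fPerm_apply, ih]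
    refine Prod.ext ?_ ?_
    · dsimp only
      rw [cs.wordProd_cons]
      group
    · dsimp only
      rw [count_lis_cons]
      by_cases h : t = σ i
      · rw [if_pos h, if_pos h, pow_add, pow_one, neg_mul, ← mul_assoc, mul_neg_one]
      · rw [if_neg h, if_neg h, add_zero]

lemma sgnRep_apply' (w : W) (t : W) : ∃ c : ℤˣ, ∀ e : ℤˣ,
    sgnRep cs w (t, e) = (w * t * w⁻¹, e * c) := by
  obtain ⟨ω, _, hω⟩ := cs.exists_reduced_word' w⁻¹
  have hw : w = (π ω)⁻¹ := by rw [← hω, inv_inv]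
  refine ⟨(-1) ^ ((cs.leftInvSeq ω).count t), fun e => ?_⟩
  rw [hw, sgnRep_wordProd_inv]
  congr 1
  group

lemma sgnRep_reflection {t : W} (ht : cs.IsReflection t) (e : ℤˣ) :
    sgnRep cs t (t, e) = (t, -e) := by
  obtain ⟨u, i, rfl⟩ := ht
  set t := u * σ i * u⁻¹ with hht
  obtain ⟨c, hc⟩ := sgnRep_apply' cs u⁻¹ t
  obtain ⟨c₂, hc₂⟩ := sgnRep_apply' cs u (σ i)
  have hfix : u⁻¹ * t * u⁻¹⁻¹ = σ i := by rw [hht]; group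
  have hcomp : ∀ e' : ℤˣ, sgnRep cs u (sgnRep cs u⁻¹ (t, e')) = (t, e') := by
    intro e'
    rw [← Equiv.Perm.mul_apply, ← map_mul, mul_inv_cancel, map_one, Equiv.Perm.one_apply]
  have h1 : ∀ e' : ℤˣ, sgnRep cs u⁻¹ (t, e') = (σ i, e' * c) := by
    intro e'; rw [hc e', hfix]
  have h2 : ∀ e' : ℤˣ, sgnRep cs u (σ i, e') = (t, e' * c₂) := by
    intro e'; rw [hc₂ e']
  have h3 : e = e * c * c₂ := by
    have := hcomp e
    rw [h1 e, h2 (e * c)] at this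
    exact (congrArg Prod.snd this).symm
  have h4 : sgnRep cs t (t, e) = sgnRep cs u (sgnRep cs (σ i) (sgnRep cs u⁻¹ (t, e))) := by
    rw [← Equiv.Perm.mul_apply, ← Equiv.Perm.mul_apply, ← map_mul, ← map_mul]
  rw [h4, h1 e, sgnRep_simple, fPerm_apply, if_pos rfl]
  have h5 : σ i * σ i * σ i = σ i := by
    rw [cs.simple_mul_simple_self, one_mul]
  rw [h5, h2 (-(e * c))]
  have h6 : -(e * c) * c₂ = -e := by rw [neg_mul, ← h3]
  rw [h6]

theorem strongExchange_mem {ω : List B} (hω : cs.IsReduced ω) {t : W}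
    (ht : cs.IsReflection t) (hlt : ℓ (t * π ω) < ℓ (π ω)) : t ∈ cs.leftInvSeq ω := by
  by_contra hmem
  have hcount0 : (cs.leftInvSeq ω).count t = 0 := List.count_eq_zero_of_not_mem hmem
  obtain ⟨ω', hred', hw'⟩ := cs.exists_reduced_word' (t * π ω)
  have hA : sgnRep cs (π ω')⁻¹ (t, 1)
      = ((π ω')⁻¹ * t * (π ω'), (-1) ^ ((cs.leftInvSeq ω').count t)) := by
    rw [sgnRep_wordProd_inv]; congr 1; rw [one_mul]
  have hB : sgnRep cs (π ω')⁻¹ (t, 1) = ((π ω)⁻¹ * t * (π ω), -1) := by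
    have hinv : (π ω')⁻¹ = (π ω)⁻¹ * t := by
      rw [← hw', mul_inv_rev, ht.inv]
    rw [hinv, map_mul, Equiv.Perm.mul_apply, sgnRep_reflection cs ht,
      sgnRep_wordProd_inv cs ω t (-1), hcount0, pow_zero, mul_one]
  have hsign : ((-1 : ℤˣ)) ^ ((cs.leftInvSeq ω').count t) = -1 := by
    have h := hA.symm.trans hB
    exact congrArg Prod.snd h
  have hmem' : t ∈ cs.leftInvSeq ω' := by
    by_contra hmem'
    rw [List.count_eq_zero_of_not_mem hmem', pow_zero] at hsign
    exact units_ne_neg_self 1 hsign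
  obtain ⟨j, hj, hgj⟩ := List.mem_iff_getElem.mp hmem'
  rw [cs.length_leftInvSeq] at hj
  have hgd : (cs.leftInvSeq ω').getD j 1 = t := by
    rw [List.getD_eq_getElem?_getD, List.getElem?_eq_getElem (by rwa [cs.length_leftInvSeq])]
    simpa using hgj
  have herase : t * π ω' = π (ω'.eraseIdx j) := by
    rw [← hgd]; exact cs.getD_leftInvSeq_mul_wordProd ω' j
  have hlen : ℓ (t * π ω') ≤ ω'.length - 1 := by
    rw [herase]
    calc ℓ (π (ω'.eraseIdx j)) ≤ (ω'.eraseIdx j).length := cs.length_wordProd_le _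
      _ = ω'.length - 1 := by rw [List.length_eraseIdx]; simp [hj]
  have hww : t * π ω' = π ω := by
    rw [← hw', ← mul_assoc, ht.mul_self, one_mul]
  have hl1 : ℓ (π ω) ≤ ω'.length - 1 := by rw [← hww]; exact hlen
  have hl2 : ω'.length = ℓ (t * π ω) := by rw [hw']; exact hred'.symm
  omega

theorem strongExchange_erase {ω : List B} (hω : cs.IsReduced ω) {t : W}
    (ht : cs.IsReflection t) (hlt : ℓ (t * π ω) < ℓ (π ω)) :
    ∃ j < ω.length, t * π ω = π (ω.eraseIdx j) := by
  have hmem := strongExchange_mem cs hω ht hlt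
  obtain ⟨j, hj, hgj⟩ := List.mem_iff_getElem.mp hmem
  rw [cs.length_leftInvSeq] at hj
  refine ⟨j, hj, ?_⟩
  have hgd : (cs.leftInvSeq ω).getD j 1 = t := by
    rw [List.getD_eq_getElem?_getD, List.getElem?_eq_getElem (by rwa [cs.length_leftInvSeq])]
    simpa using hgj
  rw [← hgd]; exact cs.getD_leftInvSeq_mul_wordProd ω j

theorem strongExchange_right {ω : List B} (hω : cs.IsReduced ω) {t : W}
    (ht : cs.IsReflection t) (hlt : ℓ (π ω * t) < ℓ (π ω)) :
    ∃ ω' : List B, ω'.Sublist ω ∧ ω'.length + 1 = ω.length ∧ π ω' = π ω * t := by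
  have hrev : cs.IsReduced ω.reverse := (cs.isReduced_reverse_iff ω).mpr hω
  have hlt' : ℓ (t * π ω.reverse) < ℓ (π ω.reverse) := by
    rw [cs.wordProd_reverse]
    rw [show t * (π ω)⁻¹ = (π ω * t)⁻¹ by rw [mul_inv_rev, ht.inv]]
    rw [cs.length_inv, cs.length_inv]
    exact hlt
  obtain ⟨j, hj, hje⟩ := strongExchange_erase cs hrev ht hlt'
  rw [List.length_reverse] at hj
  refine ⟨(ω.reverse.eraseIdx j).reverse, ?_, ?_, ?_⟩
  · have h1 : (ω.reverse.eraseIdx j).Sublist ω.reverse := List.eraseIdx_sublist _ _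
    simpa using h1.reverse
  · rw [List.length_reverse, List.length_eraseIdx]
    simp only [List.length_reverse]
    rw [if_pos hj]
    omega
  · rw [cs.wordProd_reverse, ← hje, mul_inv_rev, cs.wordProd_reverse, inv_inv, ht.inv]

theorem deletion : ∀ (ω : List B), ¬ cs.IsReduced ω →
    ∃ ω' : List B, ω'.Sublist ω ∧ ω'.length + 2 = ω.length ∧ π ω' = π ω := by
  intro ω
  induction ω with
  | nil => intro h; exact absurd (by simp [CoxeterSystem.IsReduced]) h
  | cons i ωt ih =>
    intro h
    by_cases hred : cs.IsReduced ωt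
    · -- use exchange
      have hlt : ℓ (σ i * π ωt) < ℓ (π ωt) := by
        have h1 : ℓ (π (i :: ωt)) ≤ (i :: ωt).length := cs.length_wordProd_le _
      
        have h2 : ℓ (π (i :: ωt)) ≠ (i :: ωt).length := h
        have h3 : ℓ (σ i * π ωt) ≠ ℓ (π ωt) := cs.length_simple_mul_ne _ i
        have h4 : π (i :: ωt) = σ i * π ωt := cs.wordProd_cons i ωt
        rw [h4] at h1 h2
        simp only [List.length_cons] at h1 h2
        have h5 : ωt.length = ℓ (π ωt) := hred.symm
        omega
      obtain ⟨j, hj, hje⟩ := strongExchange_erase cs hred (cs.isReflection_simple i) hlt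
      refine ⟨ωt.eraseIdx j, (List.eraseIdx_sublist ωt j).trans (List.sublist_cons_self i ωt), ?_, ?_⟩
      · rw [List.length_eraseIdx, if_pos hj]
        simp only [List.length_cons]
        omega
      · rw [← hje, cs.wordProd_cons]
    · obtain ⟨ω', hsub, hlen, hprod⟩ := ih hred
      refine ⟨i :: ω', hsub.cons₂ i, ?_, ?_⟩
      · simp only [List.length_cons]; omega
      · rw [cs.wordProd_cons, cs.wordProd_cons, hprod]

theorem exists_reduced_sublist' : ∀ (n : ℕ) (ω : List B), ω.length ≤ n →
    ∃ ω', ω'.Sublist ω ∧ cs.IsReduced ω' ∧ π ω' = π ω := by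
  intro n
  induction n with
  | zero =>
    intro ω hω
    have : ω = [] := List.eq_nil_of_length_eq_zero (by omega)
    subst this
    exact ⟨[], List.Sublist.refl _, by simp [CoxeterSystem.IsReduced], rfl⟩
  | succ n ih =>
    intro ω hω
    by_cases hr : cs.IsReduced ω
    · exact ⟨ω, List.Sublist.refl ω, hr, rfl⟩
    · obtain ⟨ω₂, hsub, hlen, hprod⟩ := deletion cs ω hr
      obtain ⟨ω', h1, h2, h3⟩ := ih ω₂ (by omega)
      exact ⟨ω', h1.trans hsub, h2, h3.trans hprod⟩

theorem exists_reduced_sublist (ω : List B) :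
    ∃ ω', ω'.Sublist ω ∧ cs.IsReduced ω' ∧ π ω' = π ω :=
  exists_reduced_sublist' cs ω.length ω le_rfl

/-- A single step in the Bruhat order. -/
def bstep (x y : W) : Prop := ∃ t, cs.IsReflection t ∧ y = x * t ∧ ℓ x < ℓ y

/-- The Bruhat order, defined via chains of reflections. -/
def chainLE : W → W → Prop := Relation.ReflTransGen (bstep cs)

lemma chainLE.refl {x : W} : chainLE cs x x := Relation.ReflTransGen.refl

lemma chainLE.trans {x y z : W} (h1 : chainLE cs x y) (h2 : chainLE cs y z) :
    chainLE cs x z := Relation.ReflTransGen.trans h1 h2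

lemma chainLE_length {x y : W} (h : chainLE cs x y) : ℓ x ≤ ℓ y := by
  induction h with
  | refl => exact le_rfl
  | tail _ hstep ih => obtain ⟨t, _, _, hlt⟩ := hstep; omega

lemma chainLE_eq_of_length {x y : W} (h : chainLE cs x y) (hl : ℓ y ≤ ℓ x) : x = y := by
  rcases Relation.ReflTransGen.cases_tail h with heq | ⟨c, hc, hstep⟩
  · exact heq.symm
  · obtain ⟨t, _, _, hlt⟩ := hstep
    have := chainLE_length cs hc
    omega

lemma bstep_smul {x : W} (i : B) (h : ℓ x < ℓ (σ i * x)) : bstep cs x (σ i * x) := by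
  refine ⟨x⁻¹ * σ i * x, ⟨x⁻¹, i, by rw [inv_inv]⟩, by group, h⟩

lemma bstep_mul_right {x t : W} (ht : cs.IsReflection t) (h : ℓ x < ℓ (x * t)) :
    bstep cs x (x * t) := ⟨t, ht, rfl, h⟩

theorem chainLE_subword {x y : W} (h : chainLE cs x y) :
    ∀ ω : List B, cs.IsReduced ω → π ω = y →
      ∃ l, l.Sublist ω ∧ cs.IsReduced l ∧ π l = x := by
  induction h with
  | refl => exact fun ω hred hπ => ⟨ω, List.Sublist.refl _, hred, hπ⟩
  | tail hxc hstep ih =>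
    rename_i b c
    intro ω hred hπ
    obtain ⟨t, ht, hy, hlt⟩ := hstep
    have hbt : π ω * t = b := by rw [hπ, hy, mul_assoc, ht.mul_self, mul_one]
    have hlt2 : ℓ (π ω * t) < ℓ (π ω) := by rw [hbt, hπ]; exact hlt
    obtain ⟨ω₂, hsub₂, hlen₂, hprod₂⟩ := strongExchange_right cs hred ht hlt2
    obtain ⟨ω₃, hsub₃, hred₃, hprod₃⟩ := exists_reduced_sublist cs ω₂
    obtain ⟨l, hl, hlred, hlprod⟩ := ih ω₃ hred₃ (by rw [hprod₃, hprod₂, hbt])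
    exact ⟨l, hl.trans (hsub₃.trans hsub₂), hlred, hlprod⟩

theorem SC_M : ∀ q : ℕ,
    (∀ ω : List B, ω.length ≤ q → cs.IsReduced ω →
      ∀ l, l.Sublist ω → cs.IsReduced l → chainLE cs (π l) (π ω))
    ∧ (∀ u w : W, ℓ w ≤ q → chainLE cs u w → ∀ i : B,
        ℓ u < ℓ (σ i * u) → ℓ w < ℓ (σ i * w) → chainLE cs (σ i * u) (σ i * w)) := by
  intro q
  induction q with
  | zero =>
    constructor
    · intro ω hlen hred l hsub hlred
      have hω : ω = [] := List.eq_nil_of_length_eq_zero (by omega)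
      subst hω
      have hl : l = [] := List.sublist_nil.mp hsub
      subst hl
      exact chainLE.refl cs
    · intro u w hw hc i hu hwi
      have hw1 : w = 1 := cs.length_eq_zero_iff.mp (by omega)
      have hu1 : u = 1 := by
        have := chainLE_length cs hc
        exact cs.length_eq_zero_iff.mp (by omega)
      rw [hu1, hw1]
      exact chainLE.refl cs
  | succ q ih =>
    obtain ⟨ihSC, ihM⟩ := ih
    have SC : ∀ ω : List B, ω.length ≤ q+1 → cs.IsReduced ω →
        ∀ l, l.Sublist ω → cs.IsReduced l → chainLE cs (π l) (π ω) := by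
      intro ω hlen hred l hsub hlred
      cases ω with
      | nil =>
        have hl : l = [] := List.sublist_nil.mp hsub
        subst hl
        exact chainLE.refl cs
      | cons i ω₂ =>
        have hred₂ : cs.IsReduced ω₂ := by
          have := hred.drop 1
          simpa using this
        have hlen₂ : ω₂.length ≤ q := by
          simp only [List.length_cons] at hlen; omega
        rcases List.sublist_cons_iff.mp hsub with hcase | ⟨l₂, rfl, hsub₂⟩
        · have h1 := ihSC ω₂ hlen₂ hred₂ l hcase hlred
          have hstep : bstep cs (π ω₂) (π (i :: ω₂)) := by
            rw [cs.wordProd_cons]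
            apply bstep_smul
            have e1 : ℓ (π ω₂) = ω₂.length := hred₂
            have e2 : ℓ (σ i * π ω₂) = ω₂.length + 1 := by
              rw [← cs.wordProd_cons]
              exact hred
            omega
          exact h1.tail hstep
        · have hlred₂ : cs.IsReduced l₂ := by
            have := hlred.drop 1
            simpa using this
          have h1 := ihSC ω₂ hlen₂ hred₂ l₂ hsub₂ hlred₂
          have hasc1 : ℓ (π l₂) < ℓ (σ i * π l₂) := by
            have e1 : ℓ (π l₂) = l₂.length := hlred₂
            have e2 : ℓ (σ i * π l₂) = l₂.length + 1 := by
              rw [← cs.wordProd_cons]; exact hlred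
            omega
          have hasc2 : ℓ (π ω₂) < ℓ (σ i * π ω₂) := by
            have e1 : ℓ (π ω₂) = ω₂.length := hred₂
            have e2 : ℓ (σ i * π ω₂) = ω₂.length + 1 := by
              rw [← cs.wordProd_cons]; exact hred
            omega
          have h2 := ihM (π l₂) (π ω₂) (by
            have e1 : ℓ (π ω₂) = ω₂.length := hred₂
            omega) h1 i hasc1 hasc2
          rw [cs.wordProd_cons, cs.wordProd_cons]
          exact h2
    refine ⟨SC, ?_⟩
    intro u w hw hc i hu hwi
    rcases Relation.ReflTransGen.cases_tail hc with heq | ⟨b, hub, hstep⟩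
    · rw [← heq]
      exact chainLE.refl cs
    · obtain ⟨t, ht, hwbt, hlt⟩ := hstep
      by_cases hbi : ℓ b < ℓ (σ i * b)
      · -- ascent case
        have h1 := ihM u b (by omega) hub i hu hbi
        have hstep2 : bstep cs (σ i * b) (σ i * w) := by
          refine ⟨t, ht, ?_, ?_⟩
          · rw [hwbt]; group
          · have e1 : ℓ (σ i * b) = ℓ b + 1 := by
              rcases cs.length_simple_mul b i with h | h
              · exact h
              · omega
            have e2 : ℓ (σ i * w) = ℓ w + 1 := by
              rcases cs.length_simple_mul w i with h | h
              · exact h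
              · omega
            omega
        exact h1.tail hstep2
      · -- descent case : ℓ (σ i * b) < ℓ b
        have hdesc : ℓ (σ i * b) + 1 = ℓ b := by
          rcases cs.length_simple_mul b i with h | h
          · omega
          · exact h
        obtain ⟨α, hαred, hα⟩ := cs.exists_reduced_word' (σ i * b)
        have hword : π (i :: α) = b := by
          rw [cs.wordProd_cons, ← hα]
          calc σ i * (σ i * b) = (σ i * σ i) * b := by group
            _ = b := by rw [cs.simple_mul_simple_self, one_mul]
        have hredword : cs.IsReduced (i :: α) := by
          show ℓ (π (i :: α)) = (i :: α).length
          rw [hword]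
          simp only [List.length_cons]
          have : ℓ (σ i * b) = α.length := by rw [hα]; exact hαred
          omega
        obtain ⟨l, hlsub, hlred, hlprod⟩ := chainLE_subword cs hub (i :: α) hredword hword
        rcases List.sublist_cons_iff.mp hlsub with hcase | ⟨l₂, rfl, hsub₂⟩
        · -- u has a reduced word inside α : u ≤ σ i * b
          have hlenα : α.length ≤ q := by
            have : ℓ (σ i * b) = α.length := by rw [hα]; exact hαred
            omega
          have h1 := ihSC α hlenα hαred l hcase hlred
          rw [hlprod, ← hα] at h1
          have hsb : ℓ (σ i * b) < ℓ (σ i * (σ i * b)) := by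
            have e4 : σ i * (σ i * b) = b := by
              calc σ i * (σ i * b) = (σ i * σ i) * b := by group
                _ = b := by rw [cs.simple_mul_simple_self, one_mul]
            rw [e4]
            omega
          have h2 := ihM u (σ i * b) (by omega) h1 i hu hsb
          have e4 : σ i * (σ i * b) = b := by
            calc σ i * (σ i * b) = (σ i * σ i) * b := by group
              _ = b := by rw [cs.simple_mul_simple_self, one_mul]
          rw [e4] at h2
          have hstepbw : bstep cs b w := ⟨t, ht, hwbt, hlt⟩
          have hstepw : bstep cs w (σ i * w) := bstep_smul cs i hwi
          exact (h2.tail hstepbw).tail hstepw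
        · -- contradiction with the ascent of u
          exfalso
          have e1 : ℓ (π (i :: l₂)) = l₂.length + 1 := by
            rw [hlred]; simp
          have e1' : ℓ u = l₂.length + 1 := by rw [← hlprod]; exact e1
          have e2 : ℓ (π l₂) = l₂.length := by
            have := hlred.drop 1
            simpa [CoxeterSystem.IsReduced] using this
          have e3 : π l₂ = σ i * u := by
            rw [← hlprod, cs.wordProd_cons]
            calc π l₂ = (σ i * σ i) * π l₂ := by rw [cs.simple_mul_simple_self, one_mul]
              _ = σ i * (σ i * π l₂) := by group
          rw [e3] at e2
          omega

theorem subword_chain {ω l : List B} (hred : cs.IsReduced ω) (hsub : l.Sublist ω)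
    (hlred : cs.IsReduced l) : chainLE cs (π l) (π ω) :=
  (SC_M cs ω.length).1 ω le_rfl hred l hsub hlred

theorem chain_smul {u w : W} (h : chainLE cs u w) (i : B)
    (hu : ℓ u < ℓ (σ i * u)) (hw : ℓ w < ℓ (σ i * w)) :
    chainLE cs (σ i * u) (σ i * w) := (SC_M cs (ℓ w)).2 u w le_rfl h i hu hw

theorem chain_Z2 {u w : W} (h : chainLE cs u w) (i : B)
    (hw : ℓ (σ i * w) < ℓ w) (hu : ℓ u < ℓ (σ i * u)) :
    chainLE cs u (σ i * w) := by
  obtain ⟨α, hαred, hα⟩ := cs.exists_reduced_word' (σ i * w)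
  have hword : π (i :: α) = w := by
    rw [cs.wordProd_cons, ← hα]
    calc σ i * (σ i * w) = (σ i * σ i) * w := by group
      _ = w := by rw [cs.simple_mul_simple_self, one_mul]
  have hdesc : ℓ (σ i * w) + 1 = ℓ w := by
    rcases cs.length_simple_mul w i with h' | h'
    · omega
    · exact h'
  have hredword : cs.IsReduced (i :: α) := by
    show ℓ (π (i :: α)) = (i :: α).length
    rw [hword]
    simp only [List.length_cons]
    have : ℓ (σ i * w) = α.length := by rw [hα]; exact hαred
    omega
  obtain ⟨l, hlsub, hlred, hlprod⟩ := chainLE_subword cs h (i :: α) hredword hword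
  rcases List.sublist_cons_iff.mp hlsub with hcase | ⟨l₂, rfl, hsub₂⟩
  · have h1 := subword_chain cs hαred hcase hlred
    rw [hlprod, ← hα] at h1
    exact h1
  · exfalso
    have e1 : ℓ (π (i :: l₂)) = l₂.length + 1 := by rw [hlred]; simp
    have e1' : ℓ u = l₂.length + 1 := by rw [← hlprod]; exact e1
    have e2 : ℓ (π l₂) = l₂.length := by
      have := hlred.drop 1
      simpa [CoxeterSystem.IsReduced] using this
    have e3 : π l₂ = σ i * u := by
      rw [← hlprod, cs.wordProd_cons]
      calc π l₂ = (σ i * σ i) * π l₂ := by rw [cs.simple_mul_simple_self, one_mul]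
        _ = σ i * (σ i * π l₂) := by group
    rw [e3] at e2
    omega

theorem chain_inv {x y : W} (h : chainLE cs x y) : chainLE cs x⁻¹ y⁻¹ := by
  induction h with
  | refl => exact chainLE.refl cs
  | tail hab hbc ih =>
    rename_i b c
    obtain ⟨t, ht, hc, hlt⟩ := hbc
    have hstep : bstep cs b⁻¹ c⁻¹ := by
      refine ⟨b * t * b⁻¹, ht.conj b, ?_, ?_⟩
      · rw [hc, mul_inv_rev, ht.inv]; group
      · rw [cs.length_inv, cs.length_inv]; exact hlt
    exact ih.tail hstep

theorem chain_mul_right {u w : W} (h : chainLE cs u w) (i : B)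
    (hu : ℓ u < ℓ (u * σ i)) (hw : ℓ w < ℓ (w * σ i)) :
    chainLE cs (u * σ i) (w * σ i) := by
  have hu' : ℓ u⁻¹ < ℓ (σ i * u⁻¹) := by
    rw [show σ i * u⁻¹ = (u * σ i)⁻¹ from by rw [mul_inv_rev, cs.inv_simple],
      cs.length_inv, cs.length_inv]
    exact hu
  have hw' : ℓ w⁻¹ < ℓ (σ i * w⁻¹) := by
    rw [show σ i * w⁻¹ = (w * σ i)⁻¹ from by rw [mul_inv_rev, cs.inv_simple],
      cs.length_inv, cs.length_inv]
    exact hw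
  have h1 := chain_smul cs (chain_inv cs h) i hu' hw'
  have h2 := chain_inv cs h1
  rw [show (σ i * u⁻¹)⁻¹ = u * σ i from by rw [mul_inv_rev, inv_inv, cs.inv_simple],
    show (σ i * w⁻¹)⁻¹ = w * σ i from by rw [mul_inv_rev, inv_inv, cs.inv_simple]] at h2
  exact h2

theorem chain_Z2_right {u w : W} (h : chainLE cs u w) (i : B)
    (hw : ℓ (w * σ i) < ℓ w) (hu : ℓ u < ℓ (u * σ i)) :
    chainLE cs u (w * σ i) := by
  have hu' : ℓ u⁻¹ < ℓ (σ i * u⁻¹) := by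
    rw [show σ i * u⁻¹ = (u * σ i)⁻¹ from by rw [mul_inv_rev, cs.inv_simple],
      cs.length_inv, cs.length_inv]
    exact hu
  have hw' : ℓ (σ i * w⁻¹) < ℓ w⁻¹ := by
    rw [show σ i * w⁻¹ = (w * σ i)⁻¹ from by rw [mul_inv_rev, cs.inv_simple],
      cs.length_inv, cs.length_inv]
    exact hw
  have h1 := chain_Z2 cs (chain_inv cs h) i hw' hu'
  have h2 := chain_inv cs h1
  rw [inv_inv, show (σ i * w⁻¹)⁻¹ = w * σ i from by
    rw [mul_inv_rev, inv_inv, cs.inv_simple]] at h2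
  exact h2

theorem chain_one_le (w : W) : chainLE cs 1 w := by
  obtain ⟨ω, hred, hw⟩ := cs.exists_reduced_word' w
  have h1 := subword_chain cs hred (List.nil_sublist ω)
    (by simp [CoxeterSystem.IsReduced])
  rw [cs.wordProd_nil] at h1
  rw [hw]
  exact h1

theorem bruhat_iff_chain {x y : W} : BruhatLE cs x y ↔ chainLE cs x y := by
  constructor
  · rintro ⟨l', hπ', hlen', l, hsub, hπl, hlen⟩
    have hred' : cs.IsReduced l' := by show ℓ (π l') = l'.length; rw [hπ', hlen']
    have hred : cs.IsReduced l := by show ℓ (π l) = l.length; rw [hπl, hlen]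
    have h1 := subword_chain cs hred' hsub hred
    rwa [hπl, hπ'] at h1
  · intro h
    obtain ⟨ω, hred, hw⟩ := cs.exists_reduced_word' y
    obtain ⟨l, hsub, hlred, hlprod⟩ := chainLE_subword cs h ω hred hw.symm
    refine ⟨ω, hw.symm, ?_, l, hsub, hlprod, ?_⟩
    · rw [hw]; exact hred.symm
    · rw [← hlprod]; exact hlred.symm

section Parabolic

variable {J : Set W}

theorem exists_word_letters (hJ : J ⊆ Set.range cs.simple) {w : W}
    (hw : w ∈ Subgroup.closure J) :
    ∃ ω : List B, (∀ i ∈ ω, σ i ∈ J) ∧ π ω = w := by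
  induction hw using Subgroup.closure_induction with
  | mem s hs =>
    obtain ⟨i, rfl⟩ := hJ hs
    exact ⟨[i], by simpa using hs, by simp⟩
  | one => exact ⟨[], by simp, by simp⟩
  | mul a b _ _ iha ihb =>
    obtain ⟨ω₁, h₁, hπ₁⟩ := iha
    obtain ⟨ω₂, h₂, hπ₂⟩ := ihb
    refine ⟨ω₁ ++ ω₂, ?_, by rw [cs.wordProd_append, hπ₁, hπ₂]⟩
    intro i hi
    rcases List.mem_append.mp hi with h | h
    · exact h₁ i h
    · exact h₂ i h
  | inv a _ iha =>
    obtain ⟨ω₁, h₁, hπ₁⟩ := iha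
    refine ⟨ω₁.reverse, ?_, by rw [cs.wordProd_reverse, hπ₁]⟩
    intro i hi
    exact h₁ i (List.mem_reverse.mp hi)

theorem exists_reduced_word_letters (hJ : J ⊆ Set.range cs.simple) {w : W}
    (hw : w ∈ Subgroup.closure J) :
    ∃ ω : List B, (∀ i ∈ ω, σ i ∈ J) ∧ cs.IsReduced ω ∧ π ω = w := by
  obtain ⟨ω, hlet, hπ⟩ := exists_word_letters cs hJ hw
  obtain ⟨ω', hsub, hred, hπ'⟩ := exists_reduced_sublist cs ω
  exact ⟨ω', fun i hi => hlet i (hsub.subset hi), hred, by rw [hπ', hπ]⟩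

theorem wordProd_mem_closure {ω : List B} (hlet : ∀ i ∈ ω, σ i ∈ J) :
    π ω ∈ Subgroup.closure J := by
  induction ω with
  | nil => simp [Subgroup.one_mem]
  | cons i ω ih =>
    rw [cs.wordProd_cons]
    exact Subgroup.mul_mem _ (Subgroup.subset_closure (hlet i (by simp)))
      (ih (fun i' hi' => hlet i' (by simp [hi'])))

theorem lis_mem_closure {ω : List B} (hlet : ∀ i ∈ ω, σ i ∈ J) :
    ∀ t ∈ cs.leftInvSeq ω, t ∈ Subgroup.closure J := by
  induction ω with
  | nil => simp
  | cons i ω ih =>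
    intro t ht
    have hlis : cs.leftInvSeq (i :: ω)
        = σ i :: List.map (⇑(MulAut.conj (σ i))) (cs.leftInvSeq ω) := rfl
    rw [hlis] at ht
    rcases List.mem_cons.mp ht with rfl | hmem
    · exact Subgroup.subset_closure (hlet i (by simp))
    · obtain ⟨t', ht', rfl⟩ := List.mem_map.mp hmem
      have h1 : t' ∈ Subgroup.closure J := ih (fun i' hi' => hlet i' (by simp [hi'])) t' ht'
      have h2 : σ i ∈ Subgroup.closure J := Subgroup.subset_closure (hlet i (by simp))
      simp only [MulAut.conj_apply]
      exact Subgroup.mul_mem _ (Subgroup.mul_mem _ h2 h1) (Subgroup.inv_mem _ h2)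

theorem simple_mem_of_mem_closure (hJ : J ⊆ Set.range cs.simple) {i : B}
    (h : σ i ∈ Subgroup.closure J) : σ i ∈ J := by
  obtain ⟨ω, hlet, hred, hπ⟩ := exists_reduced_word_letters cs hJ h
  have hlen : ω.length = 1 := by
    have h1 : ℓ (π ω) = ω.length := hred
    rw [hπ, cs.length_simple] at h1
    omega
  match ω, hlen with
  | [b], _ =>
    have : π [b] = σ b := by simp
    rw [this] at hπ
    rw [← hπ]
    exact hlet b (by simp)

theorem reduced_word_letters_mem (hJ : J ⊆ Set.range cs.simple) :
    ∀ (ω : List B), cs.IsReduced ω → π ω ∈ Subgroup.closure J → ∀ i ∈ ω, σ i ∈ J := by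
  intro ω
  induction ω with
  | nil => simp
  | cons i ω₂ ih =>
    intro hred hmem
    have hred₂ : cs.IsReduced ω₂ := by
      have := hred.drop 1
      simpa using this
    have hπ₂ : σ i * π (i :: ω₂) = π ω₂ := by
      rw [cs.wordProd_cons]
      calc σ i * (σ i * π ω₂) = (σ i * σ i) * π ω₂ := by group
        _ = π ω₂ := by rw [cs.simple_mul_simple_self, one_mul]
    have hlt : ℓ (σ i * π (i :: ω₂)) < ℓ (π (i :: ω₂)) := by
      rw [hπ₂]
      have e1 : ℓ (π ω₂) = ω₂.length := hred₂
      have e2 : ℓ (π (i :: ω₂)) = ω₂.length + 1 := by rw [hred]; simp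
      omega
    obtain ⟨ωJ, hJlet, hJred, hJπ⟩ := exists_reduced_word_letters cs hJ hmem
    have hmemlis : σ i ∈ cs.leftInvSeq ωJ := by
      apply strongExchange_mem cs hJred (cs.isReflection_simple i)
      rw [hJπ]
      exact hlt
    have hsimple_closure : σ i ∈ Subgroup.closure J := lis_mem_closure cs hJlet _ hmemlis
    have hsimpleJ : σ i ∈ J := simple_mem_of_mem_closure cs hJ hsimple_closure
    have hmem₂ : π ω₂ ∈ Subgroup.closure J := by
      rw [← hπ₂]
      exact Subgroup.mul_mem _ hsimple_closure hmem
    intro i' hi'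
    rcases List.mem_cons.mp hi' with rfl | h
    · exact hsimpleJ
    · exact ih hred₂ hmem₂ i' h

theorem exists_right_descent_in (hJ : J ⊆ Set.range cs.simple) {w : W}
    (hw : w ∈ Subgroup.closure J) (hne : w ≠ 1) :
    ∃ i : B, σ i ∈ J ∧ ℓ (w * σ i) < ℓ w ∧ w * σ i ∈ Subgroup.closure J := by
  obtain ⟨ω, hlet, hred, hπ⟩ := exists_reduced_word_letters cs hJ hw
  have hne' : ω ≠ [] := by
    intro h
    rw [h] at hπ
    simp at hπ
    exact hne hπ.symm
  obtain ⟨ω₀, b, rfl⟩ := List.eq_nil_or_concat ω |>.resolve_left hne'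
  refine ⟨b, hlet b (by simp), ?_, ?_⟩
  · have h1 : w * σ b = π ω₀ := by
      rw [← hπ, cs.wordProd_concat, mul_assoc, cs.simple_mul_simple_self, mul_one]
    have h2 : ℓ (π ω₀) ≤ ω₀.length := cs.length_wordProd_le _
    have h3 : ℓ w = ω₀.length + 1 := by
      rw [← hπ, hred]
      simp
    rw [h1]
    omega
  · have h1 : w * σ b = π ω₀ := by
      rw [← hπ, cs.wordProd_concat, mul_assoc, cs.simple_mul_simple_self, mul_one]
    rw [h1]
    exact wordProd_mem_closure cs (fun i hi => hlet i (by simp [hi]))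

theorem exists_left_descent_in (hJ : J ⊆ Set.range cs.simple) {w : W}
    (hw : w ∈ Subgroup.closure J) (hne : w ≠ 1) :
    ∃ i : B, σ i ∈ J ∧ ℓ (σ i * w) < ℓ w ∧ σ i * w ∈ Subgroup.closure J := by
  obtain ⟨i, hiJ, hlen, hmem⟩ := exists_right_descent_in cs hJ
    (Subgroup.inv_mem _ hw) (by simpa using hne)
  refine ⟨i, hiJ, ?_, ?_⟩
  · calc ℓ (σ i * w) = ℓ ((σ i * w)⁻¹) := (cs.length_inv _).symm
      _ = ℓ (w⁻¹ * σ i) := by rw [mul_inv_rev, cs.inv_simple]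
      _ < ℓ w⁻¹ := hlen
      _ = ℓ w := cs.length_inv w
  · have := Subgroup.inv_mem _ hmem
    rwa [mul_inv_rev, inv_inv, cs.inv_simple] at this

end Parabolic

section Longest

variable {J : Set W} {w0 : W}

theorem chain_le_of_all_descents (hJ : J ⊆ Set.range cs.simple) {v : W}
    (hv : v ∈ Subgroup.closure J) (hdesc : ∀ s ∈ J, ℓ (v * s) < ℓ v) :
    ∀ u ∈ Subgroup.closure J, chainLE cs u v := by
  suffices H : ∀ n, ∀ u ∈ Subgroup.closure J, ℓ u ≤ n → chainLE cs u v by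
    exact fun u hu => H (ℓ u) u hu le_rfl
  intro n
  induction n with
  | zero =>
    intro u hu hn
    have h1 : u = 1 := cs.length_eq_zero_iff.mp (by omega)
    rw [h1]
    exact chain_one_le cs v
  | succ n ih =>
    intro u hu hn
    by_cases hu1 : u = 1
    · rw [hu1]; exact chain_one_le cs v
    · obtain ⟨b, hbJ, hblen, hbmem⟩ := exists_right_descent_in cs hJ hu hu1
      have h1 : chainLE cs (u * σ b) v := ih _ hbmem (by omega)
      have husb : u * σ b * σ b = u := by
        rw [mul_assoc, cs.simple_mul_simple_self, mul_one]
      have hasc : ℓ (u * σ b) < ℓ (u * σ b * σ b) := by rw [husb]; omega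
      have hdesc0 : ℓ (v * σ b) < ℓ v := hdesc _ hbJ
      have h2 : chainLE cs (u * σ b) (v * σ b) := chain_Z2_right cs h1 b hdesc0 hasc
      have hasc0 : ℓ (v * σ b) < ℓ (v * σ b * σ b) := by
        rw [mul_assoc, cs.simple_mul_simple_self, mul_one]; omega
      have h3 := chain_mul_right cs h2 b hasc hasc0
      rw [husb, mul_assoc, cs.simple_mul_simple_self, mul_one] at h3
      exact h3

theorem longest_all_right_descents (hJ : J ⊆ Set.range cs.simple)
    (hw0 : IsLongestOf cs J w0) : ∀ s ∈ J, ℓ (w0 * s) < ℓ w0 := by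
  intro s hs
  obtain ⟨i, rfl⟩ := hJ hs
  have hne := cs.length_mul_simple_ne w0 i
  have hmem : w0 * σ i ∈ Subgroup.closure J :=
    Subgroup.mul_mem _ hw0.1 (Subgroup.subset_closure hs)
  have := hw0.2 _ hmem
  omega

theorem le_longest (hJ : J ⊆ Set.range cs.simple) (hw0 : IsLongestOf cs J w0) :
    ∀ u ∈ Subgroup.closure J, chainLE cs u w0 :=
  chain_le_of_all_descents cs hJ hw0.1 (longest_all_right_descents cs hJ hw0)

theorem eq_longest_of_length (hJ : J ⊆ Set.range cs.simple) (hw0 : IsLongestOf cs J w0)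
    {u : W} (hu : u ∈ Subgroup.closure J) (hlen : ℓ w0 ≤ ℓ u) : u = w0 :=
  chainLE_eq_of_length cs (le_longest cs hJ hw0 u hu) hlen

theorem longest_inv (hJ : J ⊆ Set.range cs.simple) (hw0 : IsLongestOf cs J w0) :
    w0⁻¹ = w0 :=
  eq_longest_of_length cs hJ hw0 (Subgroup.inv_mem _ hw0.1) (by rw [cs.length_inv])

theorem longest_sq (hJ : J ⊆ Set.range cs.simple) (hw0 : IsLongestOf cs J w0) :
    w0 * w0 = 1 := by
  nth_rw 2 [← longest_inv cs hJ hw0]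
  rw [mul_inv_cancel]

theorem exists_right_ascent_in (hJ : J ⊆ Set.range cs.simple) (hw0 : IsLongestOf cs J w0)
    {x : W} (hx : x ∈ Subgroup.closure J) (hne : x ≠ w0) :
    ∃ i : B, σ i ∈ J ∧ ℓ x < ℓ (x * σ i) := by
  by_contra h
  push_neg at h
  have hdesc : ∀ s ∈ J, ℓ (x * s) < ℓ x := by
    intro s hs
    obtain ⟨i, rfl⟩ := hJ hs
    have h1 := h i hs
    have hne2 := cs.length_mul_simple_ne x i
    omega
  have hchain := chain_le_of_all_descents cs hJ hx hdesc w0 hw0.1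
  have heq := chainLE_eq_of_length cs hchain (hw0.2 x hx)
  exact hne heq.symm

theorem longest_mul_length (hJ : J ⊆ Set.range cs.simple) (hw0 : IsLongestOf cs J w0) :
    ∀ x ∈ Subgroup.closure J, ℓ (w0 * x) + ℓ x = ℓ w0 := by
  suffices H : ∀ d, ∀ x ∈ Subgroup.closure J, ℓ w0 ≤ ℓ x + d →
      ℓ (w0 * x) + ℓ x = ℓ w0 by
    exact fun x hx => H (ℓ w0) x hx (by omega)
  intro d
  induction d with
  | zero =>
    intro x hx hd
    have hx0 : x = w0 := eq_longest_of_length cs hJ hw0 hx (by omega)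
    subst hx0
    rw [longest_sq cs hJ hw0, cs.length_one, zero_add]
  | succ d ih =>
    intro x hx hd
    by_cases hcase : ℓ w0 ≤ ℓ x + d
    · exact ih x hx hcase
    · have hne : x ≠ w0 := by
        intro h
        subst h
        omega
      obtain ⟨i, hiJ, hasc⟩ := exists_right_ascent_in cs hJ hw0 hx hne
      have hxi : ℓ (x * σ i) = ℓ x + 1 := by
        rcases cs.length_mul_simple x i with h | h
        · exact h
        · omega
      have hximem : x * σ i ∈ Subgroup.closure J :=
        Subgroup.mul_mem _ hx (Subgroup.subset_closure hiJ)
      have h1 := ih (x * σ i) hximem (by omega)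
      have e1 : w0 * x = (w0 * (x * σ i)) * σ i := by
        rw [mul_assoc, mul_assoc, cs.simple_mul_simple_self, mul_one]
      have e2 : ℓ (w0 * x) ≤ ℓ (w0 * (x * σ i)) + 1 := by
        rw [e1]
        have h4 := cs.length_mul_le (w0 * (x * σ i)) (σ i)
        rw [cs.length_simple] at h4
        exact h4
      have e3 : ℓ w0 ≤ ℓ (w0 * x) + ℓ x := by
        have h4 := cs.length_mul_le (w0 * x) x⁻¹
        rw [mul_inv_cancel_right, cs.length_inv] at h4
        exact h4
      omega

theorem mul_longest_length (hJ : J ⊆ Set.range cs.simple) (hw0 : IsLongestOf cs J w0) :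
    ∀ x ∈ Subgroup.closure J, ℓ (x * w0) + ℓ x = ℓ w0 := by
  intro x hx
  have h1 := longest_mul_length cs hJ hw0 x⁻¹ (Subgroup.inv_mem _ hx)
  have e : ℓ (x * w0) = ℓ (w0 * x⁻¹) := by
    rw [← cs.length_inv (x * w0), mul_inv_rev, longest_inv cs hJ hw0]
  rw [e, ← cs.length_inv x]
  exact h1

theorem longest_conj_simple (hJ : J ⊆ Set.range cs.simple) (hw0 : IsLongestOf cs J w0)
    {s : W} (hs : s ∈ J) :
    ∃ k : B, σ k ∈ J ∧ w0 * s * w0 = σ k := by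
  have hsmem : s ∈ Subgroup.closure J := Subgroup.subset_closure hs
  have hsw0 : s * w0 ∈ Subgroup.closure J := Subgroup.mul_mem _ hsmem hw0.1
  have hlen1 : ℓ (s * w0) + ℓ s = ℓ w0 := mul_longest_length cs hJ hw0 s hsmem
  have hlens : ℓ s = 1 := by
    obtain ⟨i, rfl⟩ := hJ hs
    exact cs.length_simple i
  have hlen2 : ℓ (w0 * (s * w0)) + ℓ (s * w0) = ℓ w0 :=
    longest_mul_length cs hJ hw0 _ hsw0
  have hlenz : ℓ (w0 * (s * w0)) = 1 := by omega
  obtain ⟨k, hk⟩ := cs.length_eq_one_iff.mp hlenz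
  have hmemz : σ k ∈ Subgroup.closure J := by
    rw [← hk]
    exact Subgroup.mul_mem _ hw0.1 hsw0
  exact ⟨k, simple_mem_of_mem_closure cs hJ hmemz, by rw [mul_assoc, hk]⟩

end Longest

section MinReps

variable {K : Set W}

/-- If `u` is of minimal length in its coset `W_K u`, then lengths add. -/
theorem lemD (hK : K ⊆ Set.range cs.simple) {u : W}
    (humin : ∀ v ∈ Subgroup.closure K, ℓ u ≤ ℓ (v * u)) :
    ∀ v ∈ Subgroup.closure K, ℓ (v * u) = ℓ v + ℓ u := by
  suffices H : ∀ n, ∀ v ∈ Subgroup.closure K, ℓ v ≤ n → ℓ (v * u) = ℓ v + ℓ u by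
    exact fun v hv => H (ℓ v) v hv le_rfl
  intro n
  induction n with
  | zero =>
    intro v hv hn
    have h1 : v = 1 := cs.length_eq_zero_iff.mp (by omega)
    rw [h1, one_mul, cs.length_one, zero_add]
  | succ n ih =>
    intro v hv hn
    by_cases hv1 : v = 1
    · rw [hv1, one_mul, cs.length_one, zero_add]
    · obtain ⟨i, hiK, hdesc, hmem⟩ := exists_left_descent_in cs hK hv hv1
      have hlv : ℓ (σ i * v) + 1 = ℓ v := by
        rcases cs.length_simple_mul v i with h | h
        · omega
        · exact h
      have ihv' := ih (σ i * v) hmem (by omega)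
      -- reduced words
      obtain ⟨ω₁, hω₁let, hω₁red, hω₁π⟩ := exists_reduced_word_letters cs hK hmem
      obtain ⟨ωᵤ, hωᵤred, hωᵤπ⟩ := cs.exists_reduced_word' u
      have hconc : π (ω₁ ++ ωᵤ) = (σ i * v) * u := by
        rw [cs.wordProd_append, hω₁π, hωᵤπ]
      have hconcred : cs.IsReduced (ω₁ ++ ωᵤ) := by
        show ℓ (π (ω₁ ++ ωᵤ)) = (ω₁ ++ ωᵤ).length
        rw [hconc, ihv', List.length_append]
        have e1 : ℓ (σ i * v) = ω₁.length := by rw [← hω₁π]; exact hω₁red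
        have e2 : ℓ u = ωᵤ.length := by rw [hωᵤπ]; exact hωᵤred
        omega
      -- suppose σ i is a left descent of (σ i * v) * u; derive a contradiction
      by_cases hbad : ℓ (σ i * ((σ i * v) * u)) < ℓ ((σ i * v) * u)
      · exfalso
        rw [← hconc] at hbad
        obtain ⟨j, hj, hje⟩ := strongExchange_erase cs hconcred
          (cs.isReflection_simple i) hbad
        have hvu : σ i * π (ω₁ ++ ωᵤ) = v * u := by
          rw [hconc]
          calc σ i * (σ i * v * u) = (σ i * σ i) * (v * u) := by group
            _ = v * u := by rw [cs.simple_mul_simple_self, one_mul]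
        rcases lt_or_ge j ω₁.length with hlt | hle
        · -- deletion in the v-part
          rw [List.eraseIdx_append_of_lt_length hlt] at hje
          have hv2 : v = π (ω₁.eraseIdx j) := by
            have h5 := hje.symm.trans hvu
            rw [cs.wordProd_append, ← hωᵤπ] at h5
            exact mul_right_cancel h5.symm
          have hlen2 : ℓ v ≤ ω₁.length - 1 := by
            rw [hv2]
            calc ℓ (π (ω₁.eraseIdx j)) ≤ (ω₁.eraseIdx j).length := cs.length_wordProd_le _
              _ = ω₁.length - 1 := by rw [List.length_eraseIdx, if_pos hlt]
          have e1 : ℓ (σ i * v) = ω₁.length := by rw [← hω₁π]; exact hω₁red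
          omega
        · -- deletion in the u-part
          rw [List.eraseIdx_append_of_length_le hle] at hje
          have hvu2 : v * u = (σ i * v) * π (ωᵤ.eraseIdx (j - ω₁.length)) := by
            rw [← hvu, hje, cs.wordProd_append, hω₁π]
          have hreflmem : v⁻¹ * σ i * v ∈ Subgroup.closure K := by
            refine Subgroup.mul_mem _ (Subgroup.mul_mem _ (Subgroup.inv_mem _ hv)
              (Subgroup.subset_closure hiK)) hv
          have hueq : (v⁻¹ * σ i * v) * u = π (ωᵤ.eraseIdx (j - ω₁.length)) := by
            have h2 : (σ i * v)⁻¹ * (v * u) = π (ωᵤ.eraseIdx (j - ω₁.length)) := by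
              rw [hvu2]; group
            rw [← h2]
            rw [mul_inv_rev, cs.inv_simple]
            group
          have hjlt : j - ω₁.length < ωᵤ.length := by
            rw [List.length_append] at hj
            omega
          have e2 : ℓ u = ωᵤ.length := by rw [hωᵤπ]; exact hωᵤred
          have hlen3 : ℓ ((v⁻¹ * σ i * v) * u) ≤ ℓ u - 1 := by
            rw [hueq]
            calc ℓ (π (ωᵤ.eraseIdx (j - ω₁.length)))
                ≤ (ωᵤ.eraseIdx (j - ω₁.length)).length := cs.length_wordProd_le _
              _ = ωᵤ.length - 1 := by rw [List.length_eraseIdx, if_pos hjlt]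
              _ = ℓ u - 1 := by omega
          have hmin2 := humin _ hreflmem
          omega
      · -- good case
        have hvueq : v * u = σ i * ((σ i * v) * u) := by
          calc v * u = (σ i * σ i) * (v * u) := by rw [cs.simple_mul_simple_self, one_mul]
            _ = σ i * ((σ i * v) * u) := by group
        have hne2 := cs.length_simple_mul ((σ i * v) * u) i
        rw [hvueq]
        omega

theorem lemD_longest {wK0 : W} (hK : K ⊆ Set.range cs.simple)
    (hwK0 : IsLongestOf cs K wK0) {u : W}
    (humin : ∀ v ∈ Subgroup.closure K, ℓ u ≤ ℓ (v * u)) :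
    ∀ v ∈ Subgroup.closure K, ℓ (v * u) ≤ ℓ (wK0 * u) := by
  intro v hv
  rw [lemD cs hK humin v hv, lemD cs hK humin wK0 hwK0.1]
  have := hwK0.2 v hv
  omega

end MinReps

section Reversal

variable {J : Set W} {w0 : W}

theorem reversal (hJ : J ⊆ Set.range cs.simple) (hw0 : IsLongestOf cs J w0) :
    ∀ x y : W, x ∈ Subgroup.closure J → y ∈ Subgroup.closure J →
      chainLE cs x y → chainLE cs (w0 * y) (w0 * x) := by
  suffices H : ∀ n, ∀ x y : W, x ∈ Subgroup.closure J → y ∈ Subgroup.closure J →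
      chainLE cs x y → 2*(ℓ w0 - ℓ x) + ℓ y ≤ n → chainLE cs (w0 * y) (w0 * x) by
    exact fun x y hx hy hxy => H _ x y hx hy hxy le_rfl
  intro n
  induction n using Nat.strong_induction_on with
  | _ n ih =>
    intro x y hx hy hxy hm
    by_cases hxw : x = w0
    · have hylen : ℓ y ≤ ℓ x := by rw [hxw]; exact hw0.2 y hy
      have hxy' : x = y := chainLE_eq_of_length cs hxy hylen
      rw [← hxy']
      exact chainLE.refl cs
    · have hxinv : x⁻¹ ∈ Subgroup.closure J := Subgroup.inv_mem _ hx
      have hxinvne : x⁻¹ ≠ w0 := by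
        intro h
        apply hxw
        rw [← inv_inv x, h, longest_inv cs hJ hw0]
      obtain ⟨i, hiJ, hasc'⟩ := exists_right_ascent_in cs hJ hw0 hxinv hxinvne
      have hasc : ℓ x < ℓ (σ i * x) := by
        calc ℓ x = ℓ x⁻¹ := (cs.length_inv x).symm
          _ < ℓ (x⁻¹ * σ i) := hasc'
          _ = ℓ ((x⁻¹ * σ i)⁻¹) := (cs.length_inv _).symm
          _ = ℓ (σ i * x) := by rw [mul_inv_rev, inv_inv, cs.inv_simple]
      obtain ⟨k, hkJ, hkeq⟩ := longest_conj_simple cs hJ hw0 hiJ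
      have hkw : σ k * w0 = w0 * σ i := by
        rw [← hkeq, mul_assoc, mul_assoc, longest_sq cs hJ hw0, mul_one]
      have hrw : ∀ z : W, w0 * (σ i * z) = σ k * (w0 * z) := by
        intro z
        rw [← mul_assoc, ← hkw, mul_assoc]
      have hecancel : ∀ z : W, σ k * (σ k * z) = z := by
        intro z
        rw [← mul_assoc, cs.simple_mul_simple_self, one_mul]
      have hxmem : σ i * x ∈ Subgroup.closure J :=
        Subgroup.mul_mem _ (Subgroup.subset_closure hiJ) hx
      have hxi : ℓ (σ i * x) = ℓ x + 1 := by
        rcases cs.length_simple_mul x i with h | h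
        · exact h
        · omega
      have hxlt : ℓ x < ℓ w0 := by
        have h1 := hw0.2 (σ i * x) hxmem
        omega
      have hlx : ℓ (w0 * x) + ℓ x = ℓ w0 := longest_mul_length cs hJ hw0 x hx
      have hlxi : ℓ (w0 * (σ i * x)) + ℓ (σ i * x) = ℓ w0 :=
        longest_mul_length cs hJ hw0 _ hxmem
      have hly : ℓ (w0 * y) + ℓ y = ℓ w0 := longest_mul_length cs hJ hw0 y hy
      have hymem : σ i * y ∈ Subgroup.closure J :=
        Subgroup.mul_mem _ (Subgroup.subset_closure hiJ) hy
      have hlyi : ℓ (w0 * (σ i * y)) + ℓ (σ i * y) = ℓ w0 :=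
        longest_mul_length cs hJ hw0 _ hymem
      by_cases hyi : ℓ y < ℓ (σ i * y)
      · -- ascent of y
        have hyi' : ℓ (σ i * y) = ℓ y + 1 := by
          rcases cs.length_simple_mul y i with h | h
          · exact h
          · omega
        have h1 := chain_smul cs hxy i hasc hyi
        have h2 := ih (2*(ℓ w0 - ℓ (σ i * x)) + ℓ (σ i * y)) (by omega)
          (σ i * x) (σ i * y) hxmem hymem h1 le_rfl
        rw [hrw x, hrw y] at h2
        have ha1 : ℓ (σ k * (w0 * y)) < ℓ (σ k * (σ k * (w0 * y))) := by
          rw [hecancel, ← hrw y]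
          omega
        have ha2 : ℓ (σ k * (w0 * x)) < ℓ (σ k * (σ k * (w0 * x))) := by
          rw [hecancel, ← hrw x]
          omega
        have h3 := chain_smul cs h2 k ha1 ha2
        rw [hecancel, hecancel] at h3
        exact h3
      · -- descent of y
        have hyi2 : ℓ (σ i * y) + 1 = ℓ y := by
          rcases cs.length_simple_mul y i with h | h
          · omega
          · exact h
        have h1 := chain_Z2 cs hxy i (by omega) hasc
        have h2 := ih (2*(ℓ w0 - ℓ x) + ℓ (σ i * y)) (by omega)
          x (σ i * y) hx hymem h1 le_rfl
        rw [hrw y] at h2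
        have hstep : bstep cs (w0 * y) (σ k * (w0 * y)) := by
          apply bstep_smul
          rw [← hrw y]
          omega
        exact (Relation.ReflTransGen.single hstep).trans h2

end Reversal

section Final

variable {J K : Set W} {wJ0 wK0 : W}

theorem closure_conj_image (hJ : J ⊆ Set.range cs.simple) (hw0 : IsLongestOf cs J wJ0)
    {v' : W} (h : v' ∈ Subgroup.closure ((fun s => wJ0 * s * wJ0) '' K)) :
    ∃ v ∈ Subgroup.closure K, v' = wJ0 * v * wJ0 := by
  have hinv : wJ0⁻¹ = wJ0 := longest_inv cs hJ hw0
  have himeq : (fun s => wJ0 * s * wJ0) '' K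
      = ⇑((MulAut.conj wJ0).toMonoidHom) '' K := by
    apply Set.image_congr
    intro a _
    simp [MulAut.conj_apply, hinv]
  rw [himeq, ← MonoidHom.map_closure] at h
  obtain ⟨v, hv, hveq⟩ := Subgroup.mem_map.mp h
  refine ⟨v, hv, ?_⟩
  rw [← hveq]
  simp [MulAut.conj_apply, hinv]

theorem conj_mem_closure_conj (hJ : J ⊆ Set.range cs.simple) (hw0 : IsLongestOf cs J wJ0)
    {v : W} (hv : v ∈ Subgroup.closure K) :
    wJ0 * v * wJ0 ∈ Subgroup.closure ((fun s => wJ0 * s * wJ0) '' K) := by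
  have hinv : wJ0⁻¹ = wJ0 := longest_inv cs hJ hw0
  have himeq : (fun s => wJ0 * s * wJ0) '' K
      = ⇑((MulAut.conj wJ0).toMonoidHom) '' K := by
    apply Set.image_congr
    intro a _
    simp [MulAut.conj_apply, hinv]
  rw [himeq, ← MonoidHom.map_closure]
  refine Subgroup.mem_map.mpr ⟨v, hv, ?_⟩
  simp [MulAut.conj_apply, hinv]

theorem conj_length (hJ : J ⊆ Set.range cs.simple) (hw0 : IsLongestOf cs J wJ0)
    {z : W} (hz : z ∈ Subgroup.closure J) : ℓ (wJ0 * z * wJ0) = ℓ z := by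
  have h1 : ℓ (z * wJ0) + ℓ z = ℓ wJ0 := mul_longest_length cs hJ hw0 z hz
  have hzw : z * wJ0 ∈ Subgroup.closure J := Subgroup.mul_mem _ hz hw0.1
  have h2 : ℓ (wJ0 * (z * wJ0)) + ℓ (z * wJ0) = ℓ wJ0 :=
    longest_mul_length cs hJ hw0 _ hzw
  rw [← mul_assoc] at h2
  omega

theorem conjK_subset (hJ : J ⊆ Set.range cs.simple) (hK : K ⊆ J)
    (hw0 : IsLongestOf cs J wJ0) : (fun s => wJ0 * s * wJ0) '' K ⊆ J := by
  rintro _ ⟨s, hs, rfl⟩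
  obtain ⟨k, hkJ, hkeq⟩ := longest_conj_simple cs hJ hw0 (hK hs)
  simpa [hkeq] using hkJ

theorem conjK0_longest (hJ : J ⊆ Set.range cs.simple) (hK : K ⊆ J)
    (hwJ0 : IsLongestOf cs J wJ0) (hwK0 : IsLongestOf cs K wK0) :
    IsLongestOf cs ((fun s => wJ0 * s * wJ0) '' K) (wJ0 * wK0 * wJ0) := by
  have hKJ : Subgroup.closure K ≤ Subgroup.closure J := Subgroup.closure_mono hK
  constructor
  · exact conj_mem_closure_conj cs hJ hwJ0 hwK0.1
  · intro v' hv'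
    obtain ⟨v, hv, rfl⟩ := closure_conj_image cs hJ hwJ0 hv'
    rw [conj_length cs hJ hwJ0 (hKJ hv), conj_length cs hJ hwJ0 (hKJ hwK0.1)]
    exact hwK0.2 v hv

theorem conj_conj_id (hJ : J ⊆ Set.range cs.simple) (hwJ0 : IsLongestOf cs J wJ0)
    (s : W) : wJ0 * (wJ0 * s * wJ0) * wJ0 = s := by
  have hsq : wJ0 * wJ0 = 1 := longest_sq cs hJ hwJ0
  calc wJ0 * (wJ0 * s * wJ0) * wJ0 = (wJ0 * wJ0) * s * (wJ0 * wJ0) := by group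
    _ = s := by rw [hsq, one_mul, mul_one]

theorem conjK_invol (hJ : J ⊆ Set.range cs.simple) (hwJ0 : IsLongestOf cs J wJ0) :
    (fun s => wJ0 * s * wJ0) '' ((fun s => wJ0 * s * wJ0) '' K) = K := by
  rw [← Set.image_comp]
  have h1 : ∀ a ∈ K, ((fun s => wJ0 * s * wJ0) ∘ (fun s => wJ0 * s * wJ0)) a = a := by
    intro a _
    exact conj_conj_id cs hJ hwJ0 a
  rw [Set.image_congr h1]
  exact Set.image_id K

theorem mapsTo_minReps (hJ : J ⊆ Set.range cs.simple) (hK : K ⊆ J)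
    (hwJ0 : IsLongestOf cs J wJ0) (hwK0 : IsLongestOf cs K wK0)
    {u : W} (hu : u ∈ minRepsIn cs J K) :
    wJ0 * wK0 * u ∈ minRepsIn cs J ((fun s => wJ0 * s * wJ0) '' K) := by
  obtain ⟨hu1, hu2⟩ := hu
  have hKs : K ⊆ Set.range cs.simple := fun s hs => hJ (hK hs)
  have hKJ : Subgroup.closure K ≤ Subgroup.closure J := Subgroup.closure_mono hK
  have hwK0J : wK0 ∈ Subgroup.closure J := hKJ hwK0.1
  constructor
  · exact Subgroup.mul_mem _ (Subgroup.mul_mem _ hwJ0.1 hwK0J) hu1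
  · intro v' hv'
    obtain ⟨v, hv, rfl⟩ := closure_conj_image cs hJ hwJ0 hv'
    have hvJ : v ∈ Subgroup.closure J := hKJ hv
    have heq1 : (wJ0 * v * wJ0) * (wJ0 * wK0 * u) = wJ0 * ((v * wK0) * u) := by
      have hsq : wJ0 * wJ0 = 1 := longest_sq cs hJ hwJ0
      calc (wJ0 * v * wJ0) * (wJ0 * wK0 * u)
          = wJ0 * v * (wJ0 * wJ0) * wK0 * u := by group
        _ = wJ0 * ((v * wK0) * u) := by rw [hsq]; group
    have hvKu : (v * wK0) * u ∈ Subgroup.closure J :=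
      Subgroup.mul_mem _ (Subgroup.mul_mem _ hvJ hwK0J) hu1
    have hwKu : wK0 * u ∈ Subgroup.closure J := Subgroup.mul_mem _ hwK0J hu1
    have h2 : ℓ (wJ0 * ((v * wK0) * u)) + ℓ ((v * wK0) * u) = ℓ wJ0 :=
      longest_mul_length cs hJ hwJ0 _ hvKu
    have h3 : ℓ (wJ0 * (wK0 * u)) + ℓ (wK0 * u) = ℓ wJ0 :=
      longest_mul_length cs hJ hwJ0 _ hwKu
    have h4 : ℓ ((v * wK0) * u) = ℓ (v * wK0) + ℓ u :=
      lemD cs hKs hu2 _ (Subgroup.mul_mem _ hv hwK0.1)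
    have h5 : ℓ (wK0 * u) = ℓ wK0 + ℓ u := lemD cs hKs hu2 _ hwK0.1
    have h6 : ℓ (v * wK0) ≤ ℓ wK0 := hwK0.2 _ (Subgroup.mul_mem _ hv hwK0.1)
    have e1 : wJ0 * wK0 * u = wJ0 * (wK0 * u) := by rw [mul_assoc]
    rw [heq1, e1]
    omega

theorem chain_wK0_mul (hK : K ⊆ Set.range cs.simple) (hwK0 : IsLongestOf cs K wK0)
    {u u' : W} (hmin : ∀ v ∈ Subgroup.closure K, ℓ u ≤ ℓ (v * u))
    (hmin' : ∀ v ∈ Subgroup.closure K, ℓ u' ≤ ℓ (v * u'))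
    (h : chainLE cs u u') : chainLE cs (wK0 * u) (wK0 * u') := by
  obtain ⟨ωK, hKred, hKπ⟩ := cs.exists_reduced_word' wK0
  obtain ⟨ωu, hured, huπ⟩ := cs.exists_reduced_word' u'
  have hconc : π (ωK ++ ωu) = wK0 * u' := by rw [cs.wordProd_append, ← hKπ, ← huπ]
  have hlen' : ℓ (wK0 * u') = ℓ wK0 + ℓ u' := lemD cs hK hmin' _ hwK0.1
  have hconcred : cs.IsReduced (ωK ++ ωu) := by
    show ℓ (π (ωK ++ ωu)) = (ωK ++ ωu).length
    rw [hconc, hlen', List.length_append]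
    have e1 : ℓ wK0 = ωK.length := by rw [hKπ]; exact hKred
    have e2 : ℓ u' = ωu.length := by rw [huπ]; exact hured
    omega
  obtain ⟨l, hsub, hlred, hlπ⟩ := chainLE_subword cs h ωu hured huπ.symm
  have hlconc : π (ωK ++ l) = wK0 * u := by rw [cs.wordProd_append, ← hKπ, hlπ]
  have hlen : ℓ (wK0 * u) = ℓ wK0 + ℓ u := lemD cs hK hmin _ hwK0.1
  have hlconcred : cs.IsReduced (ωK ++ l) := by
    show ℓ (π (ωK ++ l)) = (ωK ++ l).length
    rw [hlconc, hlen, List.length_append]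
    have e1 : ℓ wK0 = ωK.length := by rw [hKπ]; exact hKred
    have e2 : ℓ u = l.length := by rw [← hlπ]; exact hlred
    omega
  have h1 := subword_chain cs hconcred (hsub.append_left ωK) hlconcred
  rwa [hlconc, hconc] at h1

theorem forward_rev (hJ : J ⊆ Set.range cs.simple) (hK : K ⊆ J)
    (hwJ0 : IsLongestOf cs J wJ0) (hwK0 : IsLongestOf cs K wK0)
    {u u' : W} (hu : u ∈ minRepsIn cs J K) (hu' : u' ∈ minRepsIn cs J K)
    (h : chainLE cs u u') : chainLE cs (wJ0 * wK0 * u') (wJ0 * wK0 * u) := by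
  have hKs : K ⊆ Set.range cs.simple := fun s hs => hJ (hK hs)
  have hKJ : Subgroup.closure K ≤ Subgroup.closure J := Subgroup.closure_mono hK
  have h1 := chain_wK0_mul cs hKs hwK0 hu.2 hu'.2 h
  have hxmem : wK0 * u ∈ Subgroup.closure J :=
    Subgroup.mul_mem _ (hKJ hwK0.1) hu.1
  have hymem : wK0 * u' ∈ Subgroup.closure J :=
    Subgroup.mul_mem _ (hKJ hwK0.1) hu'.1
  have h2 := reversal cs hJ hwJ0 _ _ hxmem hymem h1
  rw [← mul_assoc, ← mul_assoc] at h2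
  exact h2

end Final

end BruhatAux

/-- Let `(W, S)` be a finite Coxeter system, `K ⊆ J ⊆ S` and `K' := w_{J,0} K w_{J,0}`.
Then the map `u ↦ w_{J,0} w_{K,0} u` is a bijection from `ᴷW_J` onto `ᴷ'W_J` which
reverses the Bruhat order. -/
theorem stmt_10 [Finite W] (cs : CoxeterSystem M W)
    (J K : Set W) (hJ : J ⊆ Set.range cs.simple) (hK : K ⊆ J)
    (wJ0 : W) (hwJ0 : IsLongestOf cs J wJ0)
    (wK0 : W) (hwK0 : IsLongestOf cs K wK0)
    (K' : Set W) (hK' : K' = (fun s => wJ0 * s * wJ0) '' K) :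
    Set.BijOn (fun u => wJ0 * wK0 * u) (minRepsIn cs J K) (minRepsIn cs J K') ∧
      ∀ u ∈ minRepsIn cs J K, ∀ u' ∈ minRepsIn cs J K,
        (BruhatLE cs u u' ↔ BruhatLE cs (wJ0 * wK0 * u') (wJ0 * wK0 * u)) := by
  classical
  subst hK'
  have hK's : (fun s => wJ0 * s * wJ0) '' K ⊆ J := BruhatAux.conjK_subset cs hJ hK hwJ0
  have hwK0' : IsLongestOf cs ((fun s => wJ0 * s * wJ0) '' K) (wJ0 * wK0 * wJ0) :=
    BruhatAux.conjK0_longest cs hJ hK hwJ0 hwK0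
  have hinvol : (fun s => wJ0 * s * wJ0) '' ((fun s => wJ0 * s * wJ0) '' K) = K :=
    BruhatAux.conjK_invol cs hJ hwJ0
  have hsqJ : wJ0 * wJ0 = 1 := BruhatAux.longest_sq cs hJ hwJ0
  have hKs : K ⊆ Set.range cs.simple := fun s hs => hJ (hK hs)
  have hsqK : wK0 * wK0 = 1 := BruhatAux.longest_sq cs hKs hwK0
  have hid1 : ∀ u : W, wJ0 * (wJ0 * wK0 * wJ0) * (wJ0 * wK0 * u) = u := by
    intro u
    calc wJ0 * (wJ0 * wK0 * wJ0) * (wJ0 * wK0 * u)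
        = (wJ0 * wJ0) * wK0 * (wJ0 * wJ0) * wK0 * u := by group
      _ = wK0 * (wK0 * u) := by rw [hsqJ]; group
      _ = (wK0 * wK0) * u := by group
      _ = u := by rw [hsqK, one_mul]
  have hid2 : ∀ u : W, wJ0 * wK0 * (wJ0 * (wJ0 * wK0 * wJ0) * u) = u := by
    intro u
    calc wJ0 * wK0 * (wJ0 * (wJ0 * wK0 * wJ0) * u)
        = wJ0 * wK0 * (wJ0 * wJ0) * wK0 * (wJ0 * u) := by group
      _ = wJ0 * (wK0 * wK0) * (wJ0 * u) := by rw [hsqJ]; group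
      _ = (wJ0 * wJ0) * u := by rw [hsqK]; group
      _ = u := by rw [hsqJ, one_mul]
  have hmaps1 : Set.MapsTo (fun u => wJ0 * wK0 * u) (minRepsIn cs J K)
      (minRepsIn cs J ((fun s => wJ0 * s * wJ0) '' K)) :=
    fun u hu => BruhatAux.mapsTo_minReps cs hJ hK hwJ0 hwK0 hu
  have hmaps2' := fun (u : W) (hu : u ∈ minRepsIn cs J ((fun s => wJ0 * s * wJ0) '' K)) =>
    BruhatAux.mapsTo_minReps cs hJ hK's hwJ0 hwK0' hu
  rw [hinvol] at hmaps2'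
  have hmaps2 : Set.MapsTo (fun u => wJ0 * (wJ0 * wK0 * wJ0) * u)
      (minRepsIn cs J ((fun s => wJ0 * s * wJ0) '' K)) (minRepsIn cs J K) :=
    fun u hu => hmaps2' u hu
  constructor
  · refine Set.InvOn.bijOn ⟨?_, ?_⟩ hmaps1 hmaps2
    · intro u _
      exact hid1 u
    · intro u _
      exact hid2 u
  · intro u hu u' hu'
    constructor
    · intro h
      rw [BruhatAux.bruhat_iff_chain] at h ⊢
      exact BruhatAux.forward_rev cs hJ hK hwJ0 hwK0 hu hu' h
    · intro h
      rw [BruhatAux.bruhat_iff_chain] at h ⊢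
      have h2 := BruhatAux.forward_rev cs hJ hK's hwJ0 hwK0'
        (hmaps1 hu') (hmaps1 hu) h
      rw [hid1 u, hid1 u'] at h2
      exact h2
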